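/- The retraction $\mathbf{p}$ has image exactly the set of seminorms of the form $J(u)$: a multiplicative seminorm $x$ on $k[S]$ satisfies $\mathbf{p}(x) = x$ if and only if $x = J(u)$ for some monoid homomorphism $u : S \to \overline{\mathbb{R}}$. -/
import Mathlib


/-- `exp(-·) : ℝ̄ → ℝ≥0` with `exp(-∞) = 0`. -/
noncomputable def expNeg : WithTop ℝ → NNReal
  | ⊤ => 0
  | (a : ℝ) => Real.toNNReal (Real.exp (-a))

/-- `J(u)(∑ aₛ χ^s) = max_s v(aₛ) · exp(-u(s))`. -/
noncomputable def Jmap {k S : Type*} [Field k] [AddCommMonoid S]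
    (v : k → NNReal) (u : S → WithTop ℝ) (f : S →₀ k) : NNReal :=
  f.support.sup fun s => v (f s) * expNeg (u s)

/-- `p(x)(∑ aₛ χ^s) = max_s v(aₛ) · x(χ^s)`. -/
noncomputable def pRet {k S : Type*} [Field k] [AddCommMonoid S]
    (v : k → NNReal) (x : (S →₀ k) → NNReal) (f : S →₀ k) : NNReal :=
  f.support.sup fun s => v (f s) * x (Finsupp.single s 1)

lemma expNeg_coe (a : ℝ) : expNeg (a : WithTop ℝ) = Real.toNNReal (Real.exp (-a)) := rfl

lemma expNeg_aux (a : NNReal) :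
    expNeg (if a = 0 then (⊤ : WithTop ℝ) else ((- Real.log a : ℝ) : WithTop ℝ)) = a := by
  split_ifs with h
  · simp [expNeg, h]
  · rw [expNeg_coe, neg_neg, Real.exp_log (NNReal.coe_pos.mpr (zero_lt_iff.mpr h)),
      Real.toNNReal_coe]

/-- A multiplicative seminorm `x` on `k[S]` is a fixed point of the retraction `p` if and only
if `x = J(u)` for some monoid homomorphism `u : S → ℝ̄`. -/
theorem pRet_fixed_iff_Jmap {k S : Type*} [Field k] [AddCommMonoid S]
    (v : k → NNReal) (hv1 : v 1 = 1)
    (x : (S →₀ k) → NNReal)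
    (hx1 : x (Finsupp.single 0 (1 : k)) = 1)
    (hxmul : ∀ s s' : S, x (Finsupp.single (s + s') (1 : k)) =
      x (Finsupp.single s 1) * x (Finsupp.single s' 1)) :
    pRet v x = x ↔
      ∃ u : S → WithTop ℝ,
        (u 0 = 0 ∧ ∀ s s' : S, u (s + s') = u s + u s') ∧ x = Jmap v u := by
  constructor
  · intro hfix
    set X : S → NNReal := fun s => x (Finsupp.single s 1) with hX
    refine ⟨fun s => if X s = 0 then (⊤ : WithTop ℝ) else ((- Real.log (X s) : ℝ) : WithTop ℝ),
      ⟨?_, ?_⟩, ?_⟩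
    all_goals beta_reduce
    · have h0 : X 0 = 1 := hx1
      rw [if_neg (by rw [h0]; exact one_ne_zero)]
      rw [h0]
      norm_num
    · intro s s'
      have hm : X (s + s') = X s * X s' := hxmul s s'
      by_cases hs : X s = 0
      · rw [if_pos hs, if_pos (by rw [hm, hs, zero_mul]), top_add]
      by_cases hs' : X s' = 0
      · rw [if_pos hs', if_pos (by rw [hm, hs', mul_zero]), add_top]
      have hne : X (s + s') ≠ 0 := by rw [hm]; exact mul_ne_zero hs hs'
      rw [if_neg hne, if_neg hs, if_neg hs']
      rw [← WithTop.coe_add]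
      congr 1
      rw [hm]
      push_cast
      rw [Real.log_mul (NNReal.coe_ne_zero.mpr hs) (NNReal.coe_ne_zero.mpr hs')]
      ring
    · funext f
      rw [← congrFun hfix f]
      unfold pRet Jmap
      refine Finset.sup_congr rfl fun s _ => ?_
      rw [expNeg_aux]
  · rintro ⟨u, ⟨hu0, huadd⟩, rfl⟩
    funext f
    unfold pRet Jmap
    refine Finset.sup_congr rfl fun s _ => ?_
    congr 1
    rw [Finsupp.support_single_ne_zero s one_ne_zero, Finset.sup_singleton,
      Finsupp.single_eq_same, hv1, one_mul]
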